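/- arXiv:gr-qc/9901063 — 2 statements merged into one kernel-verified Lean document; each statement's English description precedes it below -/
import Mathlib

section
/- In the trousers Morse geometry the metric factorises through the two null coordinate functions: for every point p = (x,y) ∈ ℝ² with (x,y) ≠ (0,0) and every vector w ∈ ℝ², g_p(w,w) = −(∇u(p)·w)(∇v(p)·w), where u(x,y) = √(ζ−1)(x²−y²) + 2xy and v(x,y) = √(ζ−1)(x²−y²) − 2xy and ∇ denotes the Euclidean gradient. Consequently a C¹ curve γ in N satisfies g_{γ(t)}(γ'(t),γ'(t)) = 0 at a parameter value t if and only if (u∘γ)'(t) = 0 or (v∘γ)'(t) = 0; in particular every C¹ curve along which u is constant, or along which v is constant, is a null curve. -/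
noncomputable section

open Set

/-- The punctured disc `N = {(x,y) : 0 < x² + y² < ε²}`. -/
def N2 (ε : ℝ) : Set (ℝ × ℝ) :=
  {p | 0 < p.1 ^ 2 + p.2 ^ 2 ∧ p.1 ^ 2 + p.2 ^ 2 < ε ^ 2}

/-- The trousers Morse metric (quadratic form) built from `f(x,y) = y² − x²`. -/
def g2 (ζ : ℝ) (p w : ℝ × ℝ) : ℝ :=
  4 * ((p.2 ^ 2 - (ζ - 1) * p.1 ^ 2) * w.1 ^ 2 + 2 * ζ * p.1 * p.2 * w.1 * w.2 +
    (p.1 ^ 2 - (ζ - 1) * p.2 ^ 2) * w.2 ^ 2)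

/-- The null coordinate `u(x,y) = √(ζ−1)(x²−y²) + 2xy`. -/
def uu (ζ : ℝ) (p : ℝ × ℝ) : ℝ :=
  Real.sqrt (ζ - 1) * (p.1 ^ 2 - p.2 ^ 2) + 2 * p.1 * p.2

/-- The null coordinate `v(x,y) = √(ζ−1)(x²−y²) − 2xy`. -/
def vv (ζ : ℝ) (p : ℝ × ℝ) : ℝ :=
  Real.sqrt (ζ - 1) * (p.1 ^ 2 - p.2 ^ 2) - 2 * p.1 * p.2

def m1 (ζ : ℝ) : ℝ := (Real.sqrt ζ - 1) / Real.sqrt (ζ - 1)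
def m2 (ζ : ℝ) : ℝ := (Real.sqrt ζ + 1) / Real.sqrt (ζ - 1)

/-- A future-directed timelike curve: a C¹ curve in `N` with everywhere timelike,
future-pointing tangent (`⟨∇f(γ), γ'⟩ = −2xγ₁' + 2yγ₂' > 0` where `f = y² − x²`). -/
def Timelike2 (ζ ε : ℝ) (γ γ' : ℝ → ℝ × ℝ) : Prop :=
  (∀ t ∈ Icc (0 : ℝ) 1, HasDerivAt γ (γ' t) t) ∧
  ContinuousOn γ' (Icc (0 : ℝ) 1) ∧
  (∀ t ∈ Icc (0 : ℝ) 1, γ t ∈ N2 ε) ∧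
  (∀ t ∈ Icc (0 : ℝ) 1, g2 ζ (γ t) (γ' t) < 0) ∧
  (∀ t ∈ Icc (0 : ℝ) 1, 0 < -2 * (γ t).1 * (γ' t).1 + 2 * (γ t).2 * (γ' t).2)

/-- The chronology relation `q ≪ p`. -/
def chron2 (ζ ε : ℝ) (q p : ℝ × ℝ) : Prop :=
  ∃ γ γ', Timelike2 ζ ε γ γ' ∧ γ 0 = q ∧ γ 1 = p

def Iplus2 (ζ ε : ℝ) (q : ℝ × ℝ) : Set (ℝ × ℝ) := {p ∈ N2 ε | chron2 ζ ε q p}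

def Iminus2 (ζ ε : ℝ) (q : ℝ × ℝ) : Set (ℝ × ℝ) := {p ∈ N2 ε | chron2 ζ ε p q}

/-- The common past `↓U` (interior in the open set `N` of the set of points
chronologically preceding every point of `U`). -/
def down2 (ζ ε : ℝ) (U : Set (ℝ × ℝ)) : Set (ℝ × ℝ) :=
  interior {p ∈ N2 ε | ∀ u ∈ U, chron2 ζ ε p u}

/-- Euclidean dot product on ℝ². -/
def dot2 (a b : ℝ × ℝ) : ℝ := a.1 * b.1 + a.2 * b.2

/-- Euclidean gradient of `u`. -/
def gradU (ζ : ℝ) (p : ℝ × ℝ) : ℝ × ℝ :=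
  (2 * Real.sqrt (ζ - 1) * p.1 + 2 * p.2, -(2 * Real.sqrt (ζ - 1) * p.2) + 2 * p.1)

/-- Euclidean gradient of `v`. -/
def gradV (ζ : ℝ) (p : ℝ × ℝ) : ℝ × ℝ :=
  (2 * Real.sqrt (ζ - 1) * p.1 - 2 * p.2, -(2 * Real.sqrt (ζ - 1) * p.2) - 2 * p.1)

lemma fstD {γ : ℝ → ℝ × ℝ} {d : ℝ × ℝ} {t : ℝ} (h : HasDerivAt γ d t) :
    HasDerivAt (fun s => (γ s).1) d.1 t := by
  have := hasFDerivAt_fst.comp_hasDerivAt t h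
  exact this

lemma sndD {γ : ℝ → ℝ × ℝ} {d : ℝ × ℝ} {t : ℝ} (h : HasDerivAt γ d t) :
    HasDerivAt (fun s => (γ s).2) d.2 t := by
  have := hasFDerivAt_snd.comp_hasDerivAt t h
  exact this

lemma uuD (ζ : ℝ) {γ : ℝ → ℝ × ℝ} {d : ℝ × ℝ} {t : ℝ} (h : HasDerivAt γ d t) :
    HasDerivAt (fun s => uu ζ (γ s)) (dot2 (gradU ζ (γ t)) d) t := by
  have hx := fstD h
  have hy := sndD h
  have := ((((hx.pow 2).sub (hy.pow 2)).const_mul (Real.sqrt (ζ - 1))).add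
    (((hx.mul hy).const_mul 2)))
  convert this using 1
  · rfl
  · rfl
  · ext s; simp [uu]; ring
  · simp [dot2, gradU]; ring

lemma vvD (ζ : ℝ) {γ : ℝ → ℝ × ℝ} {d : ℝ × ℝ} {t : ℝ} (h : HasDerivAt γ d t) :
    HasDerivAt (fun s => vv ζ (γ s)) (dot2 (gradV ζ (γ t)) d) t := by
  have hx := fstD h
  have hy := sndD h
  have := ((((hx.pow 2).sub (hy.pow 2)).const_mul (Real.sqrt (ζ - 1))).sub
    (((hx.mul hy).const_mul 2)))
  convert this using 1
  · rfl
  · rfl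
  · ext s; simp [vv]; ring
  · simp [dot2, gradV]; ring

lemma factor (ζ : ℝ) (hζ : 1 < ζ) (p w : ℝ × ℝ) :
    g2 ζ p w = -(dot2 (gradU ζ p) w * dot2 (gradV ζ p) w) := by
  have hs : Real.sqrt (ζ - 1) ^ 2 = ζ - 1 := Real.sq_sqrt (by linarith)
  simp only [g2, dot2, gradU, gradV]
  linear_combination (4 * w.1 ^ 2 * p.1 ^ 2 + 4 * w.2 ^ 2 * p.2 ^ 2 - 8 * p.1 * p.2 * w.1 * w.2) * hs

/-- the trousers Morse metric factorises through the null coordinates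
`u` and `v`: `g_p(w,w) = −(∇u(p)·w)(∇v(p)·w)`; consequently a C¹ curve is null at `t`
iff `(u∘γ)'(t) = 0` or `(v∘γ)'(t) = 0`, and any C¹ curve along which `u` (or `v`) is
constant is null. -/
theorem stmt0 (ζ ε : ℝ) (hζ : 1 < ζ) (hε : 0 < ε) :
    (∀ p : ℝ × ℝ, p ≠ (0, 0) → ∀ w : ℝ × ℝ,
      g2 ζ p w = -(dot2 (gradU ζ p) w * dot2 (gradV ζ p) w)) ∧
    (∀ γ γ' : ℝ → ℝ × ℝ,
      (∀ t ∈ Icc (0 : ℝ) 1, HasDerivAt γ (γ' t) t) →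
      ContinuousOn γ' (Icc (0 : ℝ) 1) →
      (∀ t ∈ Icc (0 : ℝ) 1, γ t ∈ N2 ε) →
      ((∀ t ∈ Icc (0 : ℝ) 1,
          (g2 ζ (γ t) (γ' t) = 0 ↔
            deriv (fun s => uu ζ (γ s)) t = 0 ∨ deriv (fun s => vv ζ (γ s)) t = 0)) ∧
        ((∀ t ∈ Icc (0 : ℝ) 1, uu ζ (γ t) = uu ζ (γ 0)) →
          ∀ t ∈ Icc (0 : ℝ) 1, g2 ζ (γ t) (γ' t) = 0) ∧
        ((∀ t ∈ Icc (0 : ℝ) 1, vv ζ (γ t) = vv ζ (γ 0)) →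
          ∀ t ∈ Icc (0 : ℝ) 1, g2 ζ (γ t) (γ' t) = 0))) := by
  refine ⟨fun p _ w => factor ζ hζ p w, fun γ γ' hγ hc hN => ?_⟩
  have hdu : ∀ t ∈ Icc (0:ℝ) 1, deriv (fun s => uu ζ (γ s)) t = dot2 (gradU ζ (γ t)) (γ' t) :=
    fun t ht => (uuD ζ (hγ t ht)).deriv
  have hdv : ∀ t ∈ Icc (0:ℝ) 1, deriv (fun s => vv ζ (γ s)) t = dot2 (gradV ζ (γ t)) (γ' t) :=
    fun t ht => (vvD ζ (hγ t ht)).deriv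
  refine ⟨fun t ht => ?_, fun huc t ht => ?_, fun hvc t ht => ?_⟩
  · rw [factor ζ hζ, hdu t ht, hdv t ht]
    constructor
    · intro h
      rcases mul_eq_zero.1 (by linarith : dot2 (gradU ζ (γ t)) (γ' t) * dot2 (gradV ζ (γ t)) (γ' t) = 0) with h | h
      · exact Or.inl h
      · exact Or.inr h
    · rintro (h | h) <;> rw [h] <;> ring
  · rw [factor ζ hζ]
    have h0 : HasDerivWithinAt (fun s => uu ζ (γ s)) (dot2 (gradU ζ (γ t)) (γ' t)) (Icc 0 1) t :=
      (uuD ζ (hγ t ht)).hasDerivWithinAt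
    have h1 : HasDerivWithinAt (fun s => uu ζ (γ s)) 0 (Icc 0 1) t := by
      have : HasDerivWithinAt (fun _ : ℝ => uu ζ (γ 0)) 0 (Icc 0 1) t :=
        (hasDerivAt_const t _).hasDerivWithinAt
      exact this.congr huc (huc t ht)
    have := (uniqueDiffOn_Icc one_pos t ht).eq_deriv _ h0 h1
    rw [this]; ring
  · rw [factor ζ hζ]
    have h0 : HasDerivWithinAt (fun s => vv ζ (γ s)) (dot2 (gradV ζ (γ t)) (γ' t)) (Icc 0 1) t :=
      (vvD ζ (hγ t ht)).hasDerivWithinAt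
    have h1 : HasDerivWithinAt (fun s => vv ζ (γ s)) 0 (Icc 0 1) t := by
      have : HasDerivWithinAt (fun _ : ℝ => vv ζ (γ 0)) 0 (Icc 0 1) t :=
        (hasDerivAt_const t _).hasDerivWithinAt
      exact this.congr hvc (hvc t ht)
    have := (uniqueDiffOn_Icc one_pos t ht).eq_deriv _ h0 h1
    rw [this]; ring
end
end

section
/- In the trousers Morse geometry, let q = (x_q, m₂x_q) with x_q > 0 be a point on the branch {y = m₂x, x > 0} of the future light cone ∂F of the Morse point (so that u(q) = 0 and v(q) < 0). Then I⁺(q) = {p = (p₁,p₂) ∈ N : p₂ > 0, u(p) < 0 and v(p) < v(q)} and I⁻(q) = {p = (p₁,p₂) ∈ N : p₁ > 0, u(p) > 0 and v(p) > v(q)}; in particular I⁻(q) contains no point with p₁ ≤ 0. -/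
set_option maxHeartbeats 1600000


noncomputable section

open Set

/-- du(p,w), the differential of uu applied to w. -/
def DU (ζ : ℝ) (p w : ℝ × ℝ) : ℝ :=
  (2 * Real.sqrt (ζ - 1) * p.1 + 2 * p.2) * w.1 + (2 * p.1 - 2 * Real.sqrt (ζ - 1) * p.2) * w.2
def DV (ζ : ℝ) (p w : ℝ × ℝ) : ℝ :=
  (2 * Real.sqrt (ζ - 1) * p.1 - 2 * p.2) * w.1 + (-(2 * Real.sqrt (ζ - 1) * p.2) - 2 * p.1) * w.2

lemma hs0 {ζ : ℝ} (hζ : 1 < ζ) : 0 < Real.sqrt (ζ - 1) := Real.sqrt_pos.2 (by linarith)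
lemma hs2 {ζ : ℝ} (hζ : 1 < ζ) : Real.sqrt (ζ - 1) ^ 2 = ζ - 1 := Real.sq_sqrt (by linarith)

lemma g_factor {ζ : ℝ} (hζ : 1 < ζ) (p w : ℝ × ℝ) :
    g2 ζ p w = -(DU ζ p w * DV ζ p w) := by
  have h2 := hs2 hζ
  simp only [g2, DU, DV]
  linear_combination (4 * (p.1 * w.1 - p.2 * w.2) ^ 2) * h2

lemma du_add_dv {ζ : ℝ} (p w : ℝ × ℝ) :
    DU ζ p w + DV ζ p w =
      -(2 * Real.sqrt (ζ - 1)) * (-2 * p.1 * w.1 + 2 * p.2 * w.2) := by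
  simp only [DU, DV]; ring

lemma both_neg {ζ : ℝ} (hζ : 1 < ζ) (p w : ℝ × ℝ) (hg : g2 ζ p w < 0)
    (hf : 0 < -2 * p.1 * w.1 + 2 * p.2 * w.2) : DU ζ p w < 0 ∧ DV ζ p w < 0 := by
  have h1 : 0 < DU ζ p w * DV ζ p w := by have := g_factor hζ p w; linarith
  have h2 : DU ζ p w + DV ζ p w < 0 := by
    rw [du_add_dv]; have := hs0 hζ; nlinarith
  constructor <;> nlinarith

lemma m2_gt_one {ζ : ℝ} (hζ : 1 < ζ) : 1 < m2 ζ := by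
  rw [m2, lt_div_iff₀ (hs0 hζ)]
  have h1 : Real.sqrt (ζ - 1) < Real.sqrt ζ := by
    apply Real.sqrt_lt_sqrt (by linarith) (by linarith)
  have h2 : (0:ℝ) ≤ Real.sqrt ζ := Real.sqrt_nonneg _
  linarith

lemma uu_q {ζ : ℝ} (hζ : 1 < ζ) (xq : ℝ) : uu ζ (xq, m2 ζ * xq) = 0 := by
  have h2 := hs2 hζ
  have hz : Real.sqrt ζ ^ 2 = ζ := Real.sq_sqrt (by linarith)
  have hs := hs0 hζ
  simp only [uu, m2]
  field_simp
  linear_combination xq ^ 2 * h2 - xq ^ 2 * hz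

lemma vv_q {ζ : ℝ} (hζ : 1 < ζ) (xq : ℝ) :
    vv ζ (xq, m2 ζ * xq) = -(4 * m2 ζ * xq ^ 2) := by
  have h := uu_q hζ xq
  simp only [uu, vv] at *
  linarith [h]
lemma hasDerivAt_fst' {γ : ℝ → ℝ × ℝ} {w : ℝ × ℝ} {t : ℝ} (h : HasDerivAt γ w t) :
    HasDerivAt (fun t => (γ t).1) w.1 t := h.fst
lemma hasDerivAt_snd' {γ : ℝ → ℝ × ℝ} {w : ℝ × ℝ} {t : ℝ} (h : HasDerivAt γ w t) :
    HasDerivAt (fun t => (γ t).2) w.2 t := h.snd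

lemma hasDerivAt_uu_comp {ζ : ℝ} {γ : ℝ → ℝ × ℝ} {w : ℝ × ℝ} {t : ℝ}
    (h : HasDerivAt γ w t) : HasDerivAt (fun t => uu ζ (γ t)) (DU ζ (γ t) w) t := by
  have h1 : HasDerivAt (fun t => (γ t).1) w.1 t := h.fst
  have h2 : HasDerivAt (fun t => (γ t).2) w.2 t := h.snd
  have := (((h1.fun_pow 2).fun_sub (h2.fun_pow 2)).const_mul (Real.sqrt (ζ - 1))).fun_add
    (((h1.const_mul 2).fun_mul h2))
  exact this.congr_deriv (by simp only [DU]; ring)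

lemma hasDerivAt_vv_comp {ζ : ℝ} {γ : ℝ → ℝ × ℝ} {w : ℝ × ℝ} {t : ℝ}
    (h : HasDerivAt γ w t) : HasDerivAt (fun t => vv ζ (γ t)) (DV ζ (γ t) w) t := by
  have h1 : HasDerivAt (fun t => (γ t).1) w.1 t := h.fst
  have h2 : HasDerivAt (fun t => (γ t).2) w.2 t := h.snd
  have := (((h1.fun_pow 2).fun_sub (h2.fun_pow 2)).const_mul (Real.sqrt (ζ - 1))).fun_sub
    (((h1.const_mul 2).fun_mul h2))
  exact this.congr_deriv (by simp only [DV]; ring)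

lemma uv_anti {ζ ε : ℝ} (hζ : 1 < ζ) {γ γ' : ℝ → ℝ × ℝ} (hT : Timelike2 ζ ε γ γ') :
    StrictAntiOn (fun t => uu ζ (γ t)) (Icc 0 1) ∧
    StrictAntiOn (fun t => vv ζ (γ t)) (Icc 0 1) := by
  obtain ⟨hd, hc, hN, hg, hf⟩ := hT
  have key : ∀ t ∈ Icc (0:ℝ) 1, DU ζ (γ t) (γ' t) < 0 ∧ DV ζ (γ t) (γ' t) < 0 :=
    fun t ht => both_neg hζ _ _ (hg t ht) (hf t ht)
  constructor
  · apply strictAntiOn_of_deriv_neg (convex_Icc 0 1)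
    · exact fun t ht => ((hasDerivAt_uu_comp (hd t ht)).continuousAt).continuousWithinAt
    · intro t ht
      rw [interior_Icc] at ht
      have ht' : t ∈ Icc (0:ℝ) 1 := Ioo_subset_Icc_self ht
      rw [(hasDerivAt_uu_comp (hd t ht')).deriv]
      exact (key t ht').1
  · apply strictAntiOn_of_deriv_neg (convex_Icc 0 1)
    · exact fun t ht => ((hasDerivAt_vv_comp (hd t ht)).continuousAt).continuousWithinAt
    · intro t ht
      rw [interior_Icc] at ht
      have ht' : t ∈ Icc (0:ℝ) 1 := Ioo_subset_Icc_self ht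
      rw [(hasDerivAt_vv_comp (hd t ht')).deriv]
      exact (key t ht').2
lemma uv_sum {ζ : ℝ} (p : ℝ × ℝ) :
    uu ζ p + vv ζ p = 2 * Real.sqrt (ζ - 1) * (p.1 ^ 2 - p.2 ^ 2) := by
  simp only [uu, vv]; ring

lemma fwd_y {ζ ε : ℝ} (hζ : 1 < ζ) {γ γ' : ℝ → ℝ × ℝ} (hT : Timelike2 ζ ε γ γ')
    (hq1 : (γ 0).1 ^ 2 < (γ 0).2 ^ 2) (hq2 : 0 < (γ 0).2) : 0 < (γ 1).2 := by
  obtain ⟨hu, hv⟩ := uv_anti hζ hT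
  have hs := hs0 hζ
  have key : ∀ t ∈ Icc (0:ℝ) 1, (γ t).1 ^ 2 < (γ t).2 ^ 2 := by
    intro t ht
    have h1 : uu ζ (γ t) + vv ζ (γ t) ≤ uu ζ (γ 0) + vv ζ (γ 0) := by
      rcases eq_or_lt_of_le ht.1 with h | h
      · rw [← h]
      · have := hu (left_mem_Icc.2 zero_le_one) ht h
        have := hv (left_mem_Icc.2 zero_le_one) ht h
        simp only at *; linarith
    rw [uv_sum, uv_sum] at h1
    nlinarith
  have yne : ∀ t ∈ Icc (0:ℝ) 1, (γ t).2 ≠ 0 := by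
    intro t ht h0
    have := key t ht
    rw [h0] at this
    nlinarith
  by_contra h
  push_neg at h
  have h1 : (γ 1).2 < 0 := lt_of_le_of_ne h (yne 1 (right_mem_Icc.2 zero_le_one))
  have hcont : ContinuousOn (fun t => (γ t).2) (Icc (0:ℝ) 1) :=
    fun t ht => ((hasDerivAt_snd' (hT.1 t ht)).continuousAt).continuousWithinAt
  have h0 : (0:ℝ) ∈ Icc ((fun t => (γ t).2) 1) ((fun t => (γ t).2) 0) :=
    ⟨le_of_lt h1, le_of_lt hq2⟩
  obtain ⟨c, hc, hc0⟩ := intermediate_value_Icc' zero_le_one hcont h0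
  exact yne c hc hc0

lemma fwd_x {ζ ε : ℝ} (hζ : 1 < ζ) {γ γ' : ℝ → ℝ × ℝ} (hT : Timelike2 ζ ε γ γ')
    (hu1 : uu ζ (γ 1) = 0) (hx1 : 0 < (γ 1).1) : 0 < (γ 0).1 := by
  obtain ⟨hu, hv⟩ := uv_anti hζ hT
  have hs := hs0 hζ
  have xne : ∀ t ∈ Icc (0:ℝ) 1, (γ t).1 ≠ 0 := by
    intro t ht h0
    rcases eq_or_lt_of_le ht.2 with h | h
    · rw [h] at h0; exact hx1.ne' h0
    · have hgt : uu ζ (γ t) > uu ζ (γ 1) := hu ht (right_mem_Icc.2 zero_le_one) h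
      rw [hu1] at hgt
      simp only [uu, h0] at hgt
      nlinarith [sq_nonneg (γ t).2]
  by_contra h
  push_neg at h
  have h1 : (γ 0).1 < 0 := lt_of_le_of_ne h (xne 0 (left_mem_Icc.2 zero_le_one))
  have hcont : ContinuousOn (fun t => (γ t).1) (Icc (0:ℝ) 1) :=
    fun t ht => ((hasDerivAt_fst' (hT.1 t ht)).continuousAt).continuousWithinAt
  have h0 : (0:ℝ) ∈ Icc ((fun t => (γ t).1) 0) ((fun t => (γ t).1) 1) :=
    ⟨le_of_lt h1, le_of_lt hx1⟩
  obtain ⟨c, hc, hc0⟩ := intermediate_value_Icc zero_le_one hcont h0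
  exact xne c hc hc0
/-! ### Curve construction machinery -/

def aff (a d t : ℝ) : ℝ := a + d * t
def cS (a da b db t : ℝ) : ℝ := aff a da t ^ 2 + aff b db t ^ 2
def cR (a da b db t : ℝ) : ℝ := Real.sqrt (cS a da b db t)
def cY (a da b db t : ℝ) : ℝ := Real.sqrt ((cR a da b db t - aff a da t) / 2)
def cX (a da b db t : ℝ) : ℝ := aff b db t / (2 * cY a da b db t)
def cR' (a da b db t : ℝ) : ℝ := (aff a da t * da + aff b db t * db) / cR a da b db t
def cY' (a da b db t : ℝ) : ℝ := (cR' a da b db t - da) / (4 * cY a da b db t)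
def cX' (a da b db t : ℝ) : ℝ :=
  (db * (2 * cY a da b db t) - aff b db t * (2 * cY' a da b db t)) / (2 * cY a da b db t) ^ 2

section construction

variable (a da b db t : ℝ)

lemma aff_hasDeriv : HasDerivAt (fun t => aff a da t) da t := by
  simpa [aff] using ((hasDerivAt_id t).const_mul da).const_add a

lemma cR_abs : |aff a da t| ≤ cR a da b db t := by
  rw [cR, ← Real.sqrt_sq_eq_abs]
  exact Real.sqrt_le_sqrt (by simp only [cS]; nlinarith [sq_nonneg (aff b db t)])

lemma cond_to_pos (hc : aff b db t = 0 → aff a da t < 0) :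
    0 < cR a da b db t - aff a da t := by
  by_cases hb : aff b db t = 0
  · have := hc hb
    have h0 : (0:ℝ) ≤ cR a da b db t := Real.sqrt_nonneg _
    linarith
  · have h1 : aff a da t ≤ |aff a da t| := le_abs_self _
    have h2 : |aff a da t| < cR a da b db t := by
      rw [cR, ← Real.sqrt_sq_eq_abs]
      apply Real.sqrt_lt_sqrt (sq_nonneg _)
      simp only [cS]
      nlinarith [sq_nonneg (aff b db t), pow_pos (abs_pos.2 hb) 2, sq_abs (aff b db t)]
    linarith

lemma cR_cont : Continuous (fun t => cR a da b db t) := by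
  apply Real.continuous_sqrt.comp
  unfold cS aff; fun_prop

lemma cY_cont : Continuous (fun t => cY a da b db t) := by
  apply Real.continuous_sqrt.comp
  exact (((cR_cont a da b db).sub (by unfold aff; fun_prop)).div_const 2)

variable (h : 0 < cR a da b db t - aff a da t)

include h

lemma cR_pos : 0 < cR a da b db t := by
  have h1 := cR_abs a da b db t
  have h2 := abs_nonneg (aff a da t)
  have h3 := neg_abs_le (aff a da t)
  linarith

lemma cS_pos : 0 < cS a da b db t := Real.sqrt_pos.mp (cR_pos a da b db t h)

lemma cR_sq : cR a da b db t ^ 2 = cS a da b db t :=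
  Real.sq_sqrt (cS_pos a da b db t h).le

lemma cY_pos : 0 < cY a da b db t := Real.sqrt_pos.2 (by linarith)

lemma cY_sq : cY a da b db t ^ 2 = (cR a da b db t - aff a da t) / 2 :=
  Real.sq_sqrt (by linarith)

lemma cXY : 2 * cX a da b db t * cY a da b db t = aff b db t := by
  have hy := (cY_pos a da b db t h).ne'
  rw [cX]; field_simp

lemma cX_sq : cX a da b db t ^ 2 = aff b db t ^ 2 / (2 * (cR a da b db t - aff a da t)) := by
  rw [cX, div_pow]
  congr 1
  have := cY_sq a da b db t h
  nlinarith [this]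

lemma cX_sub : cX a da b db t ^ 2 - cY a da b db t ^ 2 = aff a da t := by
  rw [cX_sq a da b db t h, cY_sq a da b db t h]
  have hne : cR a da b db t - aff a da t ≠ 0 := h.ne'
  have hRs := cR_sq a da b db t h
  rw [cS] at hRs
  field_simp
  linear_combination (-1 : ℝ) * hRs

lemma cX_add : cX a da b db t ^ 2 + cY a da b db t ^ 2 = cR a da b db t := by
  rw [cX_sq a da b db t h, cY_sq a da b db t h]
  have hne : cR a da b db t - aff a da t ≠ 0 := h.ne'
  have hRs := cR_sq a da b db t h
  rw [cS] at hRs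
  field_simp
  linear_combination (-1 : ℝ) * hRs

lemma cR_hasDeriv : HasDerivAt (fun t => cR a da b db t) (cR' a da b db t) t := by
  have hq : HasDerivAt (fun t => cS a da b db t)
      (2 * aff a da t * da + 2 * aff b db t * db) t := by
    have h1 := (aff_hasDeriv a da t).fun_pow 2
    have h2 := (aff_hasDeriv b db t).fun_pow 2
    have := h1.fun_add h2
    exact this.congr_deriv (by push_cast; ring)
  have := (Real.hasDerivAt_sqrt (cS_pos a da b db t h).ne').comp t hq
  refine this.congr_deriv ?_
  rw [cR', cR]
  have hRne := (cR_pos a da b db t h).ne'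
  rw [cR] at hRne
  field_simp

lemma cY_hasDeriv : HasDerivAt (fun t => cY a da b db t) (cY' a da b db t) t := by
  have hinner : HasDerivAt (fun t => (cR a da b db t - aff a da t) / 2)
      ((cR' a da b db t - da) / 2) t :=
    ((cR_hasDeriv a da b db t h).sub (aff_hasDeriv a da t)).div_const 2
  have hne : (cR a da b db t - aff a da t) / 2 ≠ 0 := by positivity
  have := (Real.hasDerivAt_sqrt hne).comp t hinner
  refine this.congr_deriv ?_
  rw [cY']
  have hyne := (cY_pos a da b db t h).ne'
  rw [cY] at hyne
  rw [show Real.sqrt ((cR a da b db t - aff a da t) / 2) = cY a da b db t from rfl]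
  rw [cY] at *
  field_simp
  ring

lemma cX_hasDeriv : HasDerivAt (fun t => cX a da b db t) (cX' a da b db t) t := by
  have hyne : 2 * cY a da b db t ≠ 0 := by
    have := cY_pos a da b db t h; positivity
  have := HasDerivAt.fun_div (aff_hasDeriv b db t)
    ((cY_hasDeriv a da b db t h).const_mul 2) hyne
  exact this

lemma cR'_contAt : ContinuousAt (fun t => cR' a da b db t) t := by
  unfold cR'
  apply ContinuousAt.div
  · unfold aff; fun_prop
  · exact (cR_cont a da b db).continuousAt
  · exact (cR_pos a da b db t h).ne'

lemma cY'_contAt : ContinuousAt (fun t => cY' a da b db t) t := by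
  unfold cY'
  apply ContinuousAt.div
  · exact (cR'_contAt a da b db t h).sub continuousAt_const
  · exact (continuousAt_const.mul (cY_cont a da b db).continuousAt)
  · have := cY_pos a da b db t h; positivity

lemma cX'_contAt : ContinuousAt (fun t => cX' a da b db t) t := by
  unfold cX'
  apply ContinuousAt.div
  · apply ContinuousAt.sub
    · exact continuousAt_const.mul (continuousAt_const.mul (cY_cont a da b db).continuousAt)
    · apply ContinuousAt.mul
      · unfold aff; fun_prop
      · exact continuousAt_const.mul (cY'_contAt a da b db t h)
  · exact ((continuousAt_const.mul (cY_cont a da b db).continuousAt)).pow 2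
  · have := cY_pos a da b db t h; positivity

end construction
lemma buildP_keyDU {ζ : ℝ} (hζ : 1 < ζ) {q p : ℝ × ℝ} {a da b db : ℝ}
    (ha : a = q.1 ^ 2 - q.2 ^ 2) (hda : da = p.1 ^ 2 - p.2 ^ 2 - (q.1 ^ 2 - q.2 ^ 2))
    (hb : b = 2 * q.1 * q.2) (hdb : db = 2 * p.1 * p.2 - 2 * q.1 * q.2)
    (hra : ∀ t ∈ Icc (0:ℝ) 1, 0 < cR a da b db t - aff a da t)
    (t : ℝ) (ht : t ∈ Icc (0:ℝ) 1) :
    DU ζ (cX a da b db t, cY a da b db t) (cX' a da b db t, cY' a da b db t) =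
      uu ζ p - uu ζ q ∧
    DV ζ (cX a da b db t, cY a da b db t) (cX' a da b db t, cY' a da b db t) =
      vv ζ p - vv ζ q := by
  have hf : Continuous (fun t' => cR a da b db t' - aff a da t') :=
    (cR_cont a da b db).sub (by unfold aff; fun_prop)
  have hev : ∀ᶠ t' in nhds t, 0 < cR a da b db t' - aff a da t' :=
    (hf.continuousAt).eventually (eventually_gt_nhds (hra t ht))
  have hγ : HasDerivAt (fun t' => (cX a da b db t', cY a da b db t'))
      (cX' a da b db t, cY' a da b db t) t :=
    (cX_hasDeriv a da b db t (hra t ht)).prodMk (cY_hasDeriv a da b db t (hra t ht))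
  constructor
  · have hlin : HasDerivAt (fun t' => uu ζ q + t' * (uu ζ p - uu ζ q)) (uu ζ p - uu ζ q) t := by
      simpa using ((hasDerivAt_id t).mul_const (uu ζ p - uu ζ q)).const_add (uu ζ q)
    have heq : (fun t' => uu ζ (cX a da b db t', cY a da b db t')) =ᶠ[nhds t]
        (fun t' => uu ζ q + t' * (uu ζ p - uu ζ q)) := by
      filter_upwards [hev] with t' h'
      have e1 := cX_sub a da b db t' h'
      have e2 := cXY a da b db t' h'
      simp only [uu]
      rw [e1, e2, ha, hda, hb, hdb]
      simp only [aff]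
      ring
    exact (hasDerivAt_uu_comp hγ).unique (hlin.congr_of_eventuallyEq heq)
  · have hlin : HasDerivAt (fun t' => vv ζ q + t' * (vv ζ p - vv ζ q)) (vv ζ p - vv ζ q) t := by
      simpa using ((hasDerivAt_id t).mul_const (vv ζ p - vv ζ q)).const_add (vv ζ q)
    have heq : (fun t' => vv ζ (cX a da b db t', cY a da b db t')) =ᶠ[nhds t]
        (fun t' => vv ζ q + t' * (vv ζ p - vv ζ q)) := by
      filter_upwards [hev] with t' h'
      have e1 := cX_sub a da b db t' h'
      have e2 := cXY a da b db t' h'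
      simp only [vv]
      rw [e1, e2, ha, hda, hb, hdb]
      simp only [aff]
      ring
    exact (hasDerivAt_vv_comp hγ).unique (hlin.congr_of_eventuallyEq heq)
lemma N2_sq_lt {ε : ℝ} {q : ℝ × ℝ} (h : q ∈ N2 ε) :
    (q.1 ^ 2 - q.2 ^ 2) ^ 2 + (2 * q.1 * q.2) ^ 2 < (ε ^ 2) ^ 2 := by
  obtain ⟨h1, h2⟩ := h
  nlinarith

lemma buildP {ζ ε : ℝ} (hζ : 1 < ζ) {q p : ℝ × ℝ} (hqN : q ∈ N2 ε) (hpN : p ∈ N2 ε)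
    (hq2 : 0 < q.2) (hp2 : 0 < p.2) (hu : uu ζ p < uu ζ q) (hv : vv ζ p < vv ζ q)
    (hcond : ∀ t ∈ Icc (0:ℝ) 1,
      aff (2 * q.1 * q.2) (2 * p.1 * p.2 - 2 * q.1 * q.2) t = 0 →
      aff (q.1 ^ 2 - q.2 ^ 2) (p.1 ^ 2 - p.2 ^ 2 - (q.1 ^ 2 - q.2 ^ 2)) t < 0) :
    chron2 ζ ε q p := by
  have hs := hs0 hζ
  have h2 := hs2 hζ
  have hε2 : 0 < ε ^ 2 := lt_trans hqN.1 hqN.2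
  obtain ⟨a, da, b, db, ha, hda, hb, hdb⟩ :
      ∃ a da b db : ℝ, a = q.1 ^ 2 - q.2 ^ 2 ∧ da = p.1 ^ 2 - p.2 ^ 2 - (q.1 ^ 2 - q.2 ^ 2) ∧
        b = 2 * q.1 * q.2 ∧ db = 2 * p.1 * p.2 - 2 * q.1 * q.2 :=
    ⟨_, _, _, _, rfl, rfl, rfl, rfl⟩
  have hra : ∀ t ∈ Icc (0:ℝ) 1, 0 < cR a da b db t - aff a da t := by
    intro t ht
    apply cond_to_pos
    rw [ha, hda, hb, hdb]
    exact hcond t ht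
  refine ⟨fun t => (cX a da b db t, cY a da b db t),
    fun t => (cX' a da b db t, cY' a da b db t), ⟨?_, ?_, ?_, ?_, ?_⟩, ?_, ?_⟩
  · exact fun t ht => (cX_hasDeriv a da b db t (hra t ht)).prodMk (cY_hasDeriv a da b db t (hra t ht))
  · exact fun t ht => ((cX'_contAt a da b db t (hra t ht)).prodMk
      (cY'_contAt a da b db t (hra t ht))).continuousWithinAt
  · -- membership in N2
    intro t ht
    beta_reduce
    have h' := hra t ht
    have hsum := cX_add a da b db t h'
    constructor
    · simp only
      rw [hsum]
      exact cR_pos a da b db t h'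
    · simp only
      rw [hsum, cR]
      rw [Real.sqrt_lt' hε2]
      have h0 : a ^ 2 + b ^ 2 < (ε ^ 2) ^ 2 := by
        rw [ha, hb]; exact N2_sq_lt hqN
      have h1 : (a + da) ^ 2 + (b + db) ^ 2 < (ε ^ 2) ^ 2 := by
        rw [ha, hb, hda, hdb]
        have := N2_sq_lt hpN
        nlinarith [this]
      simp only [cS, aff]
      have hcvx : (a + da * t) ^ 2 + (b + db * t) ^ 2 ≤
          (1 - t) * (a ^ 2 + b ^ 2) + t * ((a + da) ^ 2 + (b + db) ^ 2) := by
        nlinarith [mul_nonneg (mul_nonneg ht.1 (sub_nonneg.2 ht.2))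
          (add_nonneg (sq_nonneg da) (sq_nonneg db))]
      have hend : (1 - t) * (a ^ 2 + b ^ 2) + t * ((a + da) ^ 2 + (b + db) ^ 2) < (ε ^ 2) ^ 2 := by
        rcases eq_or_lt_of_le ht.1 with hteq | htpos
        · rw [← hteq]; simpa using h0
        · nlinarith [mul_nonneg (sub_nonneg.2 ht.2) (sub_pos.2 h0).le,
            mul_pos htpos (sub_pos.2 h1)]
      linarith
  · -- timelike
    intro t ht
    beta_reduce
    obtain ⟨hDU, hDV⟩ := buildP_keyDU hζ ha hda hb hdb hra t ht
    rw [g_factor hζ]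
    rw [hDU, hDV]
    nlinarith
  · -- future directed
    intro t ht
    beta_reduce
    obtain ⟨hDU, hDV⟩ := buildP_keyDU hζ ha hda hb hdb hra t ht
    have hsumdv := du_add_dv (ζ := ζ) (cX a da b db t, cY a da b db t)
      (cX' a da b db t, cY' a da b db t)
    rw [hDU, hDV] at hsumdv
    set F := -2 * (cX a da b db t) * (cX' a da b db t) + 2 * (cY a da b db t) * (cY' a da b db t) with hF
    have : uu ζ p - uu ζ q + (vv ζ p - vv ζ q) = -(2 * Real.sqrt (ζ - 1)) * F := hsumdv
    nlinarith
  · -- γ 0 = q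
    beta_reduce
    have hY0 : cY a da b db 0 = q.2 := by
      rw [cY, cR, cS]
      simp only [aff, mul_zero, add_zero, ha, hb]
      rw [show (q.1^2-q.2^2)^2 + (2*q.1*q.2)^2 = (q.1^2+q.2^2)^2 by ring,
        Real.sqrt_sq (by positivity),
        show (q.1^2+q.2^2 - (q.1^2 - q.2^2))/2 = q.2^2 by ring,
        Real.sqrt_sq hq2.le]
    have hX0 : cX a da b db 0 = q.1 := by
      rw [cX, hY0]
      simp only [aff, mul_zero, add_zero, hb]
      field_simp
    exact Prod.ext hX0 hY0
  · -- γ 1 = p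
    beta_reduce
    have hY1 : cY a da b db 1 = p.2 := by
      rw [cY, cR, cS]
      simp only [aff, mul_one, ha, hb, hda, hdb]
      rw [show (q.1^2-q.2^2 + (p.1 ^ 2 - p.2 ^ 2 - (q.1 ^ 2 - q.2 ^ 2))) = p.1^2 - p.2^2 by ring,
        show (2*q.1*q.2 + (2 * p.1 * p.2 - 2 * q.1 * q.2)) = 2*p.1*p.2 by ring,
        show (p.1^2-p.2^2)^2 + (2*p.1*p.2)^2 = (p.1^2+p.2^2)^2 by ring,
        Real.sqrt_sq (by positivity),
        show (p.1^2+p.2^2 - (p.1^2 - p.2^2))/2 = p.2^2 by ring,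
        Real.sqrt_sq hp2.le]
    have hX1 : cX a da b db 1 = p.1 := by
      rw [cX, hY1]
      simp only [aff, mul_one, hb, hdb]
      field_simp
      ring
    exact Prod.ext hX1 hY1
lemma uu_swap (ζ : ℝ) (x : ℝ × ℝ) : uu ζ (x.2, x.1) = -(vv ζ x) := by
  simp only [uu, vv]; ring

lemma vv_swap (ζ : ℝ) (x : ℝ × ℝ) : vv ζ (x.2, x.1) = -(uu ζ x) := by
  simp only [uu, vv]; ring

lemma N2_swap {ε : ℝ} {p : ℝ × ℝ} (h : p ∈ N2 ε) : (p.2, p.1) ∈ N2 ε := by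
  obtain ⟨h1, h2⟩ := h
  exact ⟨by simp only; linarith, by simp only; linarith⟩

lemma chron2_swap {ζ ε : ℝ} {a b : ℝ × ℝ} (h : chron2 ζ ε a b) :
    chron2 ζ ε (b.2, b.1) (a.2, a.1) := by
  obtain ⟨γ, γ', ⟨hd, hc, hN, hg, hf⟩, h0, h1⟩ := h
  have hmem : ∀ t ∈ Icc (0:ℝ) 1, 1 - t ∈ Icc (0:ℝ) 1 :=
    fun t ht => ⟨by linarith [ht.2], by linarith [ht.1]⟩
  have hcomp : ∀ t ∈ Icc (0:ℝ) 1, HasDerivAt (fun t => γ (1 - t)) (-(γ' (1 - t))) t := by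
    intro t ht
    have hin : HasDerivAt (fun t : ℝ => 1 - t) (-1) t := by
      simpa using (hasDerivAt_const t (1:ℝ)).fun_sub (hasDerivAt_id t)
    have := HasDerivAt.scomp t (hd (1 - t) (hmem t ht)) hin
    simpa [Function.comp_def] using this
  refine ⟨fun t => ((γ (1 - t)).2, (γ (1 - t)).1),
    fun t => (-(γ' (1 - t)).2, -(γ' (1 - t)).1), ⟨?_, ?_, ?_, ?_, ?_⟩, ?_, ?_⟩
  · intro t ht
    have h1' := hasDerivAt_snd' (hcomp t ht)
    have h2' := hasDerivAt_fst' (hcomp t ht)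
    have := h1'.prodMk h2'
    simpa using this
  · intro t ht
    have hmap : MapsTo (fun t : ℝ => 1 - t) (Icc 0 1) (Icc 0 1) := fun t ht => hmem t ht
    have hγ' := hc.comp ((continuous_const.sub continuous_id).continuousOn) hmap
    exact (((continuous_snd.comp_continuousOn hγ').neg.prodMk
      (continuous_fst.comp_continuousOn hγ').neg) t ht)
  · intro t ht
    obtain ⟨ha1, ha2⟩ := hN (1 - t) (hmem t ht)
    exact ⟨by simp only; linarith, by simp only; linarith⟩
  · intro t ht
    have hgt := hg (1 - t) (hmem t ht)
    have heq : g2 ζ ((γ (1-t)).2, (γ (1-t)).1) (-(γ' (1-t)).2, -(γ' (1-t)).1)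
        = g2 ζ (γ (1-t)) (γ' (1-t)) := by
      simp only [g2]; ring
    simpa only [heq] using hgt
  · intro t ht
    have hft := hf (1 - t) (hmem t ht)
    simp only
    nlinarith [hft]
  · simp only [sub_zero, h1]
  · simp only [sub_self, h0]
/-- for `q = (x_q, m₂ x_q)`, `x_q > 0`, a point on the branch
`{y = m₂x, x > 0}` of the future light cone of the Morse point (so `u(q) = 0` and
`v(q) < 0`): `I⁺(q) = {p ∈ N | p₂ > 0, u(p) < 0, v(p) < v(q)}` and
`I⁻(q) = {p ∈ N | p₁ > 0, u(p) > 0, v(p) > v(q)}`; in particular `I⁻(q)` contains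
no point with `p₁ ≤ 0`. -/
theorem stmt3 (ζ ε : ℝ) (hζ : 1 < ζ) (hε : 0 < ε) (xq : ℝ) (hxq : 0 < xq)
    (hq : (xq, m2 ζ * xq) ∈ N2 ε) :
    uu ζ (xq, m2 ζ * xq) = 0 ∧ vv ζ (xq, m2 ζ * xq) < 0 ∧
    Iplus2 ζ ε (xq, m2 ζ * xq) =
      {p ∈ N2 ε | 0 < p.2 ∧ uu ζ p < 0 ∧ vv ζ p < vv ζ (xq, m2 ζ * xq)} ∧
    Iminus2 ζ ε (xq, m2 ζ * xq) =
      {p ∈ N2 ε | 0 < p.1 ∧ 0 < uu ζ p ∧ vv ζ (xq, m2 ζ * xq) < vv ζ p} ∧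
    ∀ p ∈ Iminus2 ζ ε (xq, m2 ζ * xq), ¬ p.1 ≤ 0 := by
  have hs := hs0 hζ
  have h2 := hs2 hζ
  have hm2 := m2_gt_one hζ
  have huq : uu ζ (xq, m2 ζ * xq) = 0 := uu_q hζ xq
  have hvq : vv ζ (xq, m2 ζ * xq) = -(4 * m2 ζ * xq ^ 2) := vv_q hζ xq
  have hq2pos : 0 < (xq, m2 ζ * xq).2 := by simp only; nlinarith
  have hm22 : 1 < m2 ζ ^ 2 := by nlinarith
  have hqa : (xq, m2 ζ * xq).1 ^ 2 < (xq, m2 ζ * xq).2 ^ 2 := by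
    simp only [mul_pow]
    nlinarith [mul_pos hxq hxq]
  have hvqneg : vv ζ (xq, m2 ζ * xq) < 0 := by rw [hvq]; nlinarith
  refine ⟨huq, hvqneg, ?_, ?_, ?_⟩
  · -- I⁺
    ext p
    simp only [Iplus2, mem_setOf_eq, mem_sep_iff]
    constructor
    · rintro ⟨hpN, γ, γ', hT, h0, h1⟩
      obtain ⟨hau, hav⟩ := uv_anti hζ hT
      have hu : uu ζ p < uu ζ (xq, m2 ζ * xq) := by
        have := hau (left_mem_Icc.2 zero_le_one) (right_mem_Icc.2 zero_le_one) zero_lt_one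
        simp only at this
        rwa [h0, h1] at this
      have hv : vv ζ p < vv ζ (xq, m2 ζ * xq) := by
        have := hav (left_mem_Icc.2 zero_le_one) (right_mem_Icc.2 zero_le_one) zero_lt_one
        simp only at this
        rwa [h0, h1] at this
      have hy : 0 < p.2 := by
        have := fwd_y hζ hT (by rw [h0]; exact hqa) (by rw [h0]; exact hq2pos)
        rwa [h1] at this
      exact ⟨hpN, hy, by rwa [huq] at hu, hv⟩
    · rintro ⟨hpN, hp2, hup, hvp⟩
      have hpa : p.1 ^ 2 < p.2 ^ 2 := by
        have hsum := uv_sum (ζ := ζ) p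
        by_contra hcon
        push_neg at hcon
        nlinarith [mul_nonneg hs.le (sub_nonneg.2 hcon)]
      refine ⟨hpN, buildP hζ hq hpN hq2pos hp2 (by rwa [huq]) hvp ?_⟩
      intro t ht _
      simp only [aff]
      have hqa' : xq ^ 2 - (m2 ζ * xq) ^ 2 < 0 := by
        have : (xq, m2 ζ * xq).1 ^ 2 < (xq, m2 ζ * xq).2 ^ 2 := hqa
        simp only at this
        linarith
      have hpa' : p.1 ^ 2 - p.2 ^ 2 < 0 := by linarith
      rcases le_total (p.1 ^ 2 - p.2 ^ 2 - (xq ^ 2 - (m2 ζ * xq) ^ 2)) 0 with hcmp | hcmp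
      · nlinarith [mul_nonneg ht.1 (neg_nonneg.2 hcmp)]
      · nlinarith [mul_nonneg (sub_nonneg.2 ht.2) hcmp]
  · -- I⁻
    ext p
    simp only [Iminus2, mem_setOf_eq, mem_sep_iff]
    constructor
    · rintro ⟨hpN, γ, γ', hT, h0, h1⟩
      obtain ⟨hau, hav⟩ := uv_anti hζ hT
      have hu : uu ζ (xq, m2 ζ * xq) < uu ζ p := by
        have := hau (left_mem_Icc.2 zero_le_one) (right_mem_Icc.2 zero_le_one) zero_lt_one
        simp only at this
        rwa [h0, h1] at this
      have hv : vv ζ (xq, m2 ζ * xq) < vv ζ p := by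
        have := hav (left_mem_Icc.2 zero_le_one) (right_mem_Icc.2 zero_le_one) zero_lt_one
        simp only at this
        rwa [h0, h1] at this
      have hx : 0 < p.1 := by
        have := fwd_x hζ hT (by rw [h1]; exact huq) (by rw [h1]; exact hxq)
        rwa [h0] at this
      exact ⟨hpN, hx, by rwa [huq] at hu, hv⟩
    · rintro ⟨hpN, hp1, hup, hvp⟩
      refine ⟨hpN, ?_⟩
      have hσ : chron2 ζ ε ((xq, m2 ζ * xq).2, (xq, m2 ζ * xq).1) (p.2, p.1) := by
        apply buildP hζ (N2_swap hq) (N2_swap hpN)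
          (show 0 < ((xq, m2 ζ * xq).2, (xq, m2 ζ * xq).1).2 from hxq)
          (show 0 < ((p.2, p.1) : ℝ × ℝ).2 from hp1) ?_ ?_ ?_
        · rw [show ((p.2, p.1) : ℝ × ℝ) = (p.2, p.1) from rfl]
          rw [uu_swap ζ p, uu_swap ζ (xq, m2 ζ * xq)]
          linarith
        · rw [vv_swap ζ p, vv_swap ζ (xq, m2 ζ * xq), huq]
          linarith
        · -- path condition
          intro t ht hB
          simp only at hB ⊢
          set s := Real.sqrt (ζ - 1) with hs_def
          have e1 : s * (-(aff ((xq, m2 ζ * xq).2 ^ 2 - (xq, m2 ζ * xq).1 ^ 2)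
              ((p.2, p.1).1 ^ 2 - (p.2, p.1).2 ^ 2 -
                ((xq, m2 ζ * xq).2 ^ 2 - (xq, m2 ζ * xq).1 ^ 2)) t)) +
              aff (2 * (xq, m2 ζ * xq).2 * (xq, m2 ζ * xq).1)
                (2 * (p.2, p.1).1 * (p.2, p.1).2 - 2 * (xq, m2 ζ * xq).2 * (xq, m2 ζ * xq).1) t
              = (1 - t) * uu ζ (xq, m2 ζ * xq) + t * uu ζ p := by
            simp only [aff, uu]
            ring
          have e2 : s * (-(aff ((xq, m2 ζ * xq).2 ^ 2 - (xq, m2 ζ * xq).1 ^ 2)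
              ((p.2, p.1).1 ^ 2 - (p.2, p.1).2 ^ 2 -
                ((xq, m2 ζ * xq).2 ^ 2 - (xq, m2 ζ * xq).1 ^ 2)) t)) -
              aff (2 * (xq, m2 ζ * xq).2 * (xq, m2 ζ * xq).1)
                (2 * (p.2, p.1).1 * (p.2, p.1).2 - 2 * (xq, m2 ζ * xq).2 * (xq, m2 ζ * xq).1) t
              = (1 - t) * vv ζ (xq, m2 ζ * xq) + t * vv ζ p := by
            simp only [aff, vv]
            ring
          rw [hB, add_zero] at e1
          rw [hB, sub_zero] at e2
          rcases eq_or_lt_of_le ht.1 with hteq | htpos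
          · exfalso
            rw [← hteq] at e1 e2
            rw [huq] at e1
            simp only [sub_zero, one_mul, zero_mul, mul_zero, add_zero] at e1 e2
            rw [e1] at e2
            linarith
          · rw [huq] at e1
            have hpos : 0 < t * uu ζ p := mul_pos htpos hup
            nlinarith [e1, hpos, hs]
      have := chron2_swap hσ
      simpa using this
  · -- no point with p.1 ≤ 0
    rintro p ⟨hpN, γ, γ', hT, h0, h1⟩ hle
    have := fwd_x hζ hT (by rw [h1]; exact huq) (by rw [h1]; exact hxq)
    rw [h0] at this
    linarith
end
end
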